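/- The rule set 𝔍_p is sound and complete for the (PIA, PIA*)-implication problem, where PIA* is the class of possible independence atoms X⊥_p Y such that |X| = 1 or |Y| = 1, or ||X| − |Y|| ≤ 1. That is: 𝔍_p is sound for all PIAs, and for every finite set Σ of PIAs and every PIA σ = X⊥_p Y in the class PIA* over a relation schema R, Σ ⊨ σ if and only if Σ ⊢_{𝔍_p} σ. -/

import Mathlib

/-- A relation schema over a finite attribute type `Attr`: each attribute has a
domain with a distinguished null symbol `*` and at least two non-null values. -/
structure Schema (Attr : Type) where
  Dom : Attr → Type
  null : ∀ A, Dom A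
  two_nonnull : ∀ A, ∃ x y : Dom A, x ≠ null A ∧ y ≠ null A ∧ x ≠ y

variable {Attr : Type} [DecidableEq Attr]

/-- A tuple over the schema: a choice of a domain value for each attribute. -/
abbrev Tuple (S : Schema Attr) : Type := ∀ A, S.Dom A

/-- A relation: a finite multiset of tuples. -/
abbrev DBRel (S : Schema Attr) : Type := Multiset (Tuple S)

/-- `t` is non-null on every attribute of `X` (i.e. the projection of `t` on `X` is complete). -/
def completeOn (S : Schema Attr) (X : Finset Attr) (t : Tuple S) : Prop :=
  ∀ A ∈ X, t A ≠ S.null A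

/-- `t` and `t'` agree on all attributes of `X` (i.e. `t(X) = t'(X)`). -/
def agreeOn (S : Schema Attr) (X : Finset Attr) (t t' : Tuple S) : Prop :=
  ∀ A ∈ X, t A = t' A

/-- `r` satisfies the independence atom `X ⊥ Y`. -/
def satIA (S : Schema Attr) (r : DBRel S) (X Y : Finset Attr) : Prop :=
  (∀ t ∈ r, completeOn S (X ∪ Y) t) ∧
    ∀ t1 ∈ r, ∀ t2 ∈ r, ∃ t ∈ r, agreeOn S X t t1 ∧ agreeOn S Y t t2

/-- `t'` is a grounding of `t`: a complete tuple agreeing with `t` on its non-null entries. -/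
def groundsTuple (S : Schema Attr) (t' t : Tuple S) : Prop :=
  (∀ A, t' A ≠ S.null A) ∧ ∀ A, t A ≠ S.null A → t' A = t A

/-- `r'` is a grounding of `r`: each copy of each tuple is grounded independently. -/
def grounds (S : Schema Attr) (r' r : DBRel S) : Prop :=
  Multiset.Rel (groundsTuple S) r' r

/-- `r` satisfies the possible independence atom `X ⊥ₚ Y`. -/
def satPIA (S : Schema Attr) (r : DBRel S) (X Y : Finset Attr) : Prop :=
  ∃ r', grounds S r' r ∧ satIA S r' X Y

/-- `r` satisfies the certain independence atom `X ⊥_c Y`. -/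
def satCIA (S : Schema Attr) (r : DBRel S) (X Y : Finset Attr) : Prop :=
  ∀ r', grounds S r' r → satIA S r' X Y

/-- `Γ ⊨ X ⊥ₚ Y`: logical implication for possible independence atoms
(atoms coded as pairs `(X, Y)`). -/
def impliesPIA (S : Schema Attr) (Γ : Finset (Finset Attr × Finset Attr))
    (X Y : Finset Attr) : Prop :=
  ∀ r : DBRel S, (∀ p ∈ Γ, satPIA S r p.1 p.2) → satPIA S r X Y

/-- Deducibility of possible independence atoms from `Γ` via the rule set 𝔍_p:
trivial independence, symmetry, constancy, and decomposition (no exchange). -/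
inductive DerivPIA (Γ : Finset (Finset Attr × Finset Attr)) :
    Finset Attr → Finset Attr → Prop where
  | mem : ∀ X Y, (X, Y) ∈ Γ → DerivPIA Γ X Y
  | triv : ∀ X, DerivPIA Γ X ∅
  | symm : ∀ X Y, DerivPIA Γ X Y → DerivPIA Γ Y X
  | const : ∀ X Y Z, DerivPIA Γ X X → DerivPIA Γ Y Z → DerivPIA Γ (X ∪ Y) Z
  | decomp : ∀ X Y Z, DerivPIA Γ X (Y ∪ Z) → DerivPIA Γ X Y

/-- Membership in the class PIA*: `|X| = 1` or `|Y| = 1`, or `||X| - |Y|| ≤ 1`. -/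
def PIAstar (X Y : Finset Attr) : Prop :=
  X.card = 1 ∨ Y.card = 1 ∨ |(X.card : ℤ) - (Y.card : ℤ)| ≤ 1

set_option linter.unusedSectionVars false

namespace PIAAux

attribute [local instance] Classical.propDecidable

variable {Attr : Type} [DecidableEq Attr]

/-! ### Values -/

noncomputable def v0 (S : Schema Attr) (A : Attr) : S.Dom A :=
  (S.two_nonnull A).choose

noncomputable def v1 (S : Schema Attr) (A : Attr) : S.Dom A :=
  (S.two_nonnull A).choose_spec.choose

lemma v0_spec (S : Schema Attr) (A : Attr) :
    v0 S A ≠ S.null A ∧ v1 S A ≠ S.null A ∧ v0 S A ≠ v1 S A :=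
  (S.two_nonnull A).choose_spec.choose_spec

lemma v0_ne_null (S : Schema Attr) (A : Attr) : v0 S A ≠ S.null A := (v0_spec S A).1
lemma v1_ne_null (S : Schema Attr) (A : Attr) : v1 S A ≠ S.null A := (v0_spec S A).2.1
lemma v0_ne_v1 (S : Schema Attr) (A : Attr) : v0 S A ≠ v1 S A := (v0_spec S A).2.2

/-! ### Multiset relation helpers -/

lemma rel_map_pair {α β γ : Type*} {R : β → γ → Prop} (f : α → β) (g : α → γ)
    (s : Multiset α) (h : ∀ x ∈ s, R (f x) (g x)) :
    Multiset.Rel R (s.map f) (s.map g) := by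
  induction s using Multiset.induction with
  | empty => simp [Multiset.Rel.zero]
  | cons a s ih =>
    simp only [Multiset.map_cons]
    exact Multiset.Rel.cons (h a (Multiset.mem_cons_self a s))
      (ih fun x hx => h x (Multiset.mem_cons_of_mem hx))

lemma rel_partner_right {α β : Type*} {R : α → β → Prop} {s : Multiset α} {t : Multiset β}
    (h : Multiset.Rel R s t) : ∀ b ∈ t, ∃ a ∈ s, R a b := by
  induction h with
  | zero => intro b hb; simp at hb
  | @cons a b s t hab hst ih =>
    intro c hc
    rcases Multiset.mem_cons.1 hc with rfl | hc
    · exact ⟨a, Multiset.mem_cons_self a s, hab⟩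
    · obtain ⟨a', ha', hr⟩ := ih c hc
      exact ⟨a', Multiset.mem_cons_of_mem ha', hr⟩

lemma rel_partner_left {α β : Type*} {R : α → β → Prop} {s : Multiset α} {t : Multiset β}
    (h : Multiset.Rel R s t) : ∀ a ∈ s, ∃ b ∈ t, R a b := by
  induction h with
  | zero => intro b hb; simp at hb
  | @cons a b s t hab hst ih =>
    intro c hc
    rcases Multiset.mem_cons.1 hc with rfl | hc
    · exact ⟨b, Multiset.mem_cons_self b t, hab⟩
    · obtain ⟨b', hb', hr⟩ := ih c hc
      exact ⟨b', Multiset.mem_cons_of_mem hb', hr⟩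

lemma rel_map_of_rel {α β γ : Type*} {R : α → β → Prop} {R' : γ → β → Prop}
    {s : Multiset α} {t : Multiset β} (h : Multiset.Rel R s t) (f : α → γ)
    (hf : ∀ a b, a ∈ s → b ∈ t → R a b → R' (f a) b) :
    Multiset.Rel R' (s.map f) t := by
  induction h with
  | zero => simp [Multiset.Rel.zero]
  | @cons a b s t hab hst ih =>
    simp only [Multiset.map_cons]
    refine Multiset.Rel.cons
      (hf a b (Multiset.mem_cons_self a s) (Multiset.mem_cons_self b t) hab) ?_
    exact ih fun a' b' ha hb hr =>
      hf a' b' (Multiset.mem_cons_of_mem ha) (Multiset.mem_cons_of_mem hb) hr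

/-! ### Basic facts about groundings and satisfaction -/

variable {S : Schema Attr}

/-- The default grounding of a tuple: fill nulls with `v0`. -/
noncomputable def fillT (S : Schema Attr) (t : Tuple S) : Tuple S :=
  fun A => if t A = S.null A then v0 S A else t A

lemma groundsTuple_fillT (t : Tuple S) : groundsTuple S (fillT S t) t := by
  constructor
  · intro A
    unfold fillT
    split
    · exact v0_ne_null S A
    · assumption
  · intro A hA
    unfold fillT
    rw [if_neg hA]

lemma grounds_fill (r : DBRel S) : grounds S (r.map (fillT S)) r := by
  unfold grounds
  have := rel_map_pair (R := groundsTuple S) (fillT S) id r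
    (fun x _ => groundsTuple_fillT x)
  simpa using this

lemma satIA_mono {r : DBRel S} {X Y X' Y' : Finset Attr}
    (h : satIA S r X Y) (hX : X' ⊆ X) (hY : Y' ⊆ Y) : satIA S r X' Y' := by
  constructor
  · intro t ht A hA
    exact h.1 t ht A (Finset.union_subset_union hX hY hA)
  · intro t1 h1 t2 h2
    obtain ⟨t, ht, hXa, hYa⟩ := h.2 t1 h1 t2 h2
    exact ⟨t, ht, fun A hA => hXa A (hX hA), fun A hA => hYa A (hY hA)⟩

lemma satIA_symm {r : DBRel S} {X Y : Finset Attr} (h : satIA S r X Y) : satIA S r Y X := by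
  constructor
  · intro t ht A hA
    exact h.1 t ht A (by rwa [Finset.union_comm])
  · intro t1 h1 t2 h2
    obtain ⟨t, ht, hXa, hYa⟩ := h.2 t2 h2 t1 h1
    exact ⟨t, ht, hYa, hXa⟩

lemma satPIA_symm {r : DBRel S} {X Y : Finset Attr} (h : satPIA S r X Y) : satPIA S r Y X := by
  obtain ⟨r', hg, hs⟩ := h
  exact ⟨r', hg, satIA_symm hs⟩

lemma satPIA_mono {r : DBRel S} {X Y X' Y' : Finset Attr}
    (h : satPIA S r X Y) (hX : X' ⊆ X) (hY : Y' ⊆ Y) : satPIA S r X' Y' := by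
  obtain ⟨r', hg, hs⟩ := h
  exact ⟨r', hg, satIA_mono hs hX hY⟩

lemma satPIA_triv (r : DBRel S) (X : Finset Attr) : satPIA S r X ∅ := by
  refine ⟨r.map (fillT S), grounds_fill r, ?_, ?_⟩
  · intro t ht A hA
    obtain ⟨s, _, rfl⟩ := Multiset.mem_map.1 ht
    exact (groundsTuple_fillT s).1 A
  · intro t1 h1 t2 h2
    exact ⟨t1, h1, fun A hA => rfl, fun A hA => by simp at hA⟩

end PIAAux
namespace PIAAux

variable {Attr : Type} [DecidableEq Attr] {S : Schema Attr}

/-! ### Soundness of the constancy rule -/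

/-- From `X ⊥ₚ X` we get quasi-constancy of the columns in `X`. -/
lemma quasiconst {r : DBRel S} {X : Finset Attr} (h : satPIA S r X X) :
    ∀ A ∈ X, ∀ t ∈ r, ∀ t' ∈ r, t A ≠ S.null A → t' A ≠ S.null A → t A = t' A := by
  obtain ⟨r1, hg, hs⟩ := h
  intro A hA t ht t' ht' hn hn'
  obtain ⟨u, hu, hgu⟩ := rel_partner_right hg t ht
  obtain ⟨u', hu', hgu'⟩ := rel_partner_right hg t' ht'
  obtain ⟨c, _, h1, h2⟩ := hs.2 u hu u' hu'
  have e1 : c A = u A := h1 A hA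
  have e2 : c A = u' A := h2 A hA
  rw [← hgu.2 A hn, ← hgu'.2 A hn', ← e1, ← e2]

open Classical in
/-- The constant value of a quasi-constant column. -/
noncomputable def cval (S : Schema Attr) (r : DBRel S) (A : Attr) : S.Dom A :=
  if h : ∃ t, t ∈ r ∧ t A ≠ S.null A then h.choose A else v0 S A

lemma cval_ne_null (r : DBRel S) (A : Attr) : cval S r A ≠ S.null A := by
  unfold cval
  split
  · next h => exact h.choose_spec.2
  · exact v0_ne_null S A

lemma satPIA_const {r : DBRel S} {X Y Z : Finset Attr}
    (hX : satPIA S r X X) (hYZ : satPIA S r Y Z) : satPIA S r (X ∪ Y) Z := by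
  classical
  obtain ⟨r2, hg2, hs2⟩ := hYZ
  have hqc := quasiconst hX
  have cval_eq : ∀ A ∈ X, ∀ t ∈ r, t A ≠ S.null A → cval S r A = t A := by
    intro A hA t ht hn
    unfold cval
    have hex : ∃ u, u ∈ r ∧ u A ≠ S.null A := ⟨t, ht, hn⟩
    rw [dif_pos hex]
    exact hqc A hA _ hex.choose_spec.1 t ht hex.choose_spec.2 hn
  set f : Tuple S → Tuple S := fun t A => if A ∈ X then cval S r A else t A with hf
  refine ⟨r2.map f, ?_, ?_, ?_⟩
  · -- grounds
    unfold grounds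
    refine rel_map_of_rel hg2 f ?_
    intro a b ha hb hab
    constructor
    · intro A
      by_cases hAX : A ∈ X
      · simp only [hf, if_pos hAX]; exact cval_ne_null r A
      · simp only [hf, if_neg hAX]; exact hab.1 A
    · intro A hn
      by_cases hAX : A ∈ X
      · simp only [hf, if_pos hAX]; exact cval_eq A hAX b hb hn
      · simp only [hf, if_neg hAX]; exact hab.2 A hn
  · -- completeness
    intro t ht A hA
    obtain ⟨s, hsmem, rfl⟩ := Multiset.mem_map.1 ht
    by_cases hAX : A ∈ X
    · simp only [hf, if_pos hAX]; exact cval_ne_null r A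
    · simp only [hf, if_neg hAX]
      rcases Finset.mem_union.1 hA with hA' | hA'
      · rcases Finset.mem_union.1 hA' with hA'' | hA''
        · exact absurd hA'' hAX
        · exact hs2.1 s hsmem A (Finset.mem_union_left _ hA'')
      · exact hs2.1 s hsmem A (Finset.mem_union_right _ hA')
  · -- independence
    intro t1 h1 t2 h2
    obtain ⟨s1, hs1m, rfl⟩ := Multiset.mem_map.1 h1
    obtain ⟨s2, hs2m, rfl⟩ := Multiset.mem_map.1 h2
    obtain ⟨c, hc, hca, hcb⟩ := hs2.2 s1 hs1m s2 hs2m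
    refine ⟨f c, Multiset.mem_map_of_mem f hc, ?_, ?_⟩
    · intro A hA
      by_cases hAX : A ∈ X
      · simp only [hf, if_pos hAX]
      · simp only [hf, if_neg hAX]
        rcases Finset.mem_union.1 hA with hA' | hA'
        · exact absurd hA' hAX
        · exact hca A hA'
    · intro A hA
      by_cases hAX : A ∈ X
      · simp only [hf, if_pos hAX]
      · simp only [hf, if_neg hAX]
        exact hcb A hA

/-- Soundness of 𝔍_p. -/
theorem soundness (Γ : Finset (Finset Attr × Finset Attr)) (X Y : Finset Attr)
    (h : DerivPIA Γ X Y) : impliesPIA S Γ X Y := by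
  induction h with
  | mem X Y hmem => exact fun r hr => hr (X, Y) hmem
  | triv X => exact fun r _ => satPIA_triv r X
  | symm X Y _ ih => exact fun r hr => satPIA_symm (ih r hr)
  | const X Y Z _ _ ihX ihYZ => exact fun r hr => satPIA_const (ihX r hr) (ihYZ r hr)
  | decomp X Y Z _ ih =>
    exact fun r hr => satPIA_mono (ih r hr) (le_refl X) Finset.subset_union_left

end PIAAux
namespace PIAAux

variable {Attr : Type} [DecidableEq Attr]

/-! ### Syntactic characterization of derivability -/

/-- The set of constant attributes determined by `Γ`. -/
def CC (Γ : Finset (Finset Attr × Finset Attr)) : Finset Attr :=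
  Γ.biUnion (fun p => p.1 ∩ p.2)

lemma mem_CC {Γ : Finset (Finset Attr × Finset Attr)} {A : Attr} :
    A ∈ CC Γ ↔ ∃ p ∈ Γ, A ∈ p.1 ∧ A ∈ p.2 := by
  simp [CC, Finset.mem_biUnion, Finset.mem_inter]

/-- The characterizing predicate for derivability. -/
def PP (Γ : Finset (Finset Attr × Finset Attr)) (X Y : Finset Attr) : Prop :=
  X ⊆ CC Γ ∨ Y ⊆ CC Γ ∨
    ∃ p ∈ Γ, (X \ CC Γ ⊆ p.1 ∧ Y \ CC Γ ⊆ p.2) ∨ (X \ CC Γ ⊆ p.2 ∧ Y \ CC Γ ⊆ p.1)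

/-- Shrink the right side of a derivable atom. -/
lemma deriv_shrink {Γ : Finset (Finset Attr × Finset Attr)} {U V V' : Finset Attr}
    (h : DerivPIA Γ U V) (hsub : V' ⊆ V) : DerivPIA Γ U V' := by
  have hV : V' ∪ V = V := Finset.union_eq_right.mpr hsub
  have := DerivPIA.decomp U V' V (by rwa [hV])
  exact this

lemma deriv_shrink_left {Γ : Finset (Finset Attr × Finset Attr)} {U V U' : Finset Attr}
    (h : DerivPIA Γ U V) (hsub : U' ⊆ U) : DerivPIA Γ U' V :=
  DerivPIA.symm _ _ (deriv_shrink (DerivPIA.symm _ _ h) hsub)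

lemma deriv_singleton_CC {Γ : Finset (Finset Attr × Finset Attr)} {A : Attr}
    (hA : A ∈ CC Γ) : DerivPIA Γ {A} {A} := by
  obtain ⟨p, hp, h1, h2⟩ := mem_CC.1 hA
  have h0 : DerivPIA Γ p.1 p.2 := DerivPIA.mem p.1 p.2 (by simpa using hp)
  have h3 : DerivPIA Γ p.1 {A} := deriv_shrink h0 (Finset.singleton_subset_iff.2 h2)
  exact deriv_shrink_left h3 (Finset.singleton_subset_iff.2 h1)

lemma deriv_CC_self {Γ : Finset (Finset Attr × Finset Attr)} {T : Finset Attr}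
    (hT : T ⊆ CC Γ) : DerivPIA Γ T T := by
  classical
  induction T using Finset.induction_on with
  | empty => exact DerivPIA.triv ∅
  | @insert a s ha ih =>
    have hs : s ⊆ CC Γ := fun x hx => hT (Finset.mem_insert_of_mem hx)
    have haC : a ∈ CC Γ := hT (Finset.mem_insert_self a s)
    have h1 : DerivPIA Γ {a} {a} := deriv_singleton_CC haC
    have h2 : DerivPIA Γ s s := ih hs
    have h3 : DerivPIA Γ ({a} ∪ s) s := DerivPIA.const {a} s s h1 h2
    have h4 : DerivPIA Γ s ({a} ∪ s) := DerivPIA.symm _ _ h3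
    have h5 : DerivPIA Γ ({a} ∪ s) ({a} ∪ s) := DerivPIA.const {a} s ({a} ∪ s) h1 h4
    rwa [Finset.insert_eq]

/-- From `T ⊆ C` and any `W`, derive `T ⊥ W`. -/
lemma deriv_CC_any {Γ : Finset (Finset Attr × Finset Attr)} {T W : Finset Attr}
    (hT : T ⊆ CC Γ) : DerivPIA Γ T W := by
  have h1 : DerivPIA Γ T T := deriv_CC_self hT
  have h2 : DerivPIA Γ ∅ W := DerivPIA.symm _ _ (DerivPIA.triv W)
  have h3 : DerivPIA Γ (T ∪ ∅) W := DerivPIA.const T ∅ W h1 h2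
  rwa [Finset.union_empty] at h3

lemma PP_to_deriv {Γ : Finset (Finset Attr × Finset Attr)} {X Y : Finset Attr}
    (h : PP Γ X Y) : DerivPIA Γ X Y := by
  rcases h with hX | hY | ⟨p, hp, hcase⟩
  · exact deriv_CC_any hX
  · exact DerivPIA.symm _ _ (deriv_CC_any hY)
  · have h0 : DerivPIA Γ p.1 p.2 := DerivPIA.mem p.1 p.2 (by simpa using hp)
    have key : ∀ U V : Finset Attr, X \ CC Γ ⊆ U → Y \ CC Γ ⊆ V → DerivPIA Γ U V →
        DerivPIA Γ X Y := by
      intro U V hXU hYV hUV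
      have d1 : DerivPIA Γ (X \ CC Γ) (Y \ CC Γ) :=
        deriv_shrink_left (deriv_shrink hUV hYV) hXU
      have dXC : DerivPIA Γ (X ∩ CC Γ) (X ∩ CC Γ) :=
        deriv_CC_self Finset.inter_subset_right
      have d2 : DerivPIA Γ ((X ∩ CC Γ) ∪ (X \ CC Γ)) (Y \ CC Γ) :=
        DerivPIA.const _ _ _ dXC d1
      have hXu : X ∩ CC Γ ∪ X \ CC Γ = X := by
        ext A; simp only [Finset.mem_union, Finset.mem_inter, Finset.mem_sdiff]; tauto
      rw [hXu] at d2
      have d3 : DerivPIA Γ (Y \ CC Γ) X := DerivPIA.symm _ _ d2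
      have dYC : DerivPIA Γ (Y ∩ CC Γ) (Y ∩ CC Γ) :=
        deriv_CC_self Finset.inter_subset_right
      have d4 : DerivPIA Γ ((Y ∩ CC Γ) ∪ (Y \ CC Γ)) X :=
        DerivPIA.const _ _ _ dYC d3
      have hYu : Y ∩ CC Γ ∪ Y \ CC Γ = Y := by
        ext A; simp only [Finset.mem_union, Finset.mem_inter, Finset.mem_sdiff]; tauto
      rw [hYu] at d4
      exact DerivPIA.symm _ _ d4
    rcases hcase with ⟨h1, h2⟩ | ⟨h1, h2⟩
    · exact key p.1 p.2 h1 h2 h0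
    · exact key p.2 p.1 h1 h2 (DerivPIA.symm _ _ h0)

lemma PP_symm {Γ : Finset (Finset Attr × Finset Attr)} {X Y : Finset Attr}
    (h : PP Γ X Y) : PP Γ Y X := by
  rcases h with hX | hY | ⟨p, hp, hcase⟩
  · exact Or.inr (Or.inl hX)
  · exact Or.inl hY
  · refine Or.inr (Or.inr ⟨p, hp, ?_⟩)
    rcases hcase with ⟨h1, h2⟩ | ⟨h1, h2⟩
    · exact Or.inr ⟨h2, h1⟩
    · exact Or.inl ⟨h2, h1⟩

lemma PP_self_subset {Γ : Finset (Finset Attr × Finset Attr)} {X : Finset Attr}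
    (h : PP Γ X X) : X ⊆ CC Γ := by
  rcases h with hX | hX | ⟨p, hp, hcase⟩
  · exact hX
  · exact hX
  · have hsub : X \ CC Γ ⊆ CC Γ := by
      intro A hA
      have h1 : A ∈ p.1 ∧ A ∈ p.2 := by
        rcases hcase with ⟨u, v⟩ | ⟨u, v⟩
        · exact ⟨u hA, v hA⟩
        · exact ⟨v hA, u hA⟩
      exact mem_CC.2 ⟨p, hp, h1⟩
    intro A hA
    by_cases hAC : A ∈ CC Γ
    · exact hAC
    · exact hsub (Finset.mem_sdiff.2 ⟨hA, hAC⟩)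

lemma deriv_to_PP {Γ : Finset (Finset Attr × Finset Attr)} {X Y : Finset Attr}
    (h : DerivPIA Γ X Y) : PP Γ X Y := by
  induction h with
  | mem X Y hmem =>
    exact Or.inr (Or.inr ⟨(X, Y), hmem, Or.inl ⟨Finset.sdiff_subset, Finset.sdiff_subset⟩⟩)
  | triv X => exact Or.inr (Or.inl (Finset.empty_subset _))
  | symm X Y _ ih => exact PP_symm ih
  | const X Y Z _ _ ihX ihYZ =>
    have hXC : X ⊆ CC Γ := PP_self_subset ihX
    rcases ihYZ with hY | hZ | ⟨p, hp, hcase⟩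
    · exact Or.inl (Finset.union_subset hXC hY)
    · exact Or.inr (Or.inl hZ)
    · refine Or.inr (Or.inr ⟨p, hp, ?_⟩)
      have hXY : (X ∪ Y) \ CC Γ ⊆ Y \ CC Γ := by
        intro A hA
        rw [Finset.mem_sdiff] at hA ⊢
        rcases Finset.mem_union.1 hA.1 with h1 | h1
        · exact absurd (hXC h1) hA.2
        · exact ⟨h1, hA.2⟩
      rcases hcase with ⟨h1, h2⟩ | ⟨h1, h2⟩
      · exact Or.inl ⟨hXY.trans h1, h2⟩
      · exact Or.inr ⟨hXY.trans h1, h2⟩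
  | decomp X Y Z _ ih =>
    rcases ih with hX | hYZ | ⟨p, hp, hcase⟩
    · exact Or.inl hX
    · exact Or.inr (Or.inl ((Finset.subset_union_left).trans hYZ))
    · refine Or.inr (Or.inr ⟨p, hp, ?_⟩)
      have hsub : Y \ CC Γ ⊆ (Y ∪ Z) \ CC Γ :=
        Finset.sdiff_subset_sdiff Finset.subset_union_left (le_refl _)
      rcases hcase with ⟨h1, h2⟩ | ⟨h1, h2⟩
      · exact Or.inl ⟨h1, hsub.trans h2⟩
      · exact Or.inr ⟨h1, hsub.trans h2⟩

end PIAAux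
namespace PIAAux

variable {Attr : Type} [DecidableEq Attr]

/-! ### The counterexample relation -/

/-- Complete tuple with `v1` on `s` and `v0` elsewhere. -/
noncomputable def CT (S : Schema Attr) (s : Finset Attr) : Tuple S :=
  fun A => if A ∈ s then v1 S A else v0 S A

/-- Partial tuple: like `CT s` on `E`, null outside. -/
noncomputable def PT (S : Schema Attr) (s E : Finset Attr) : Tuple S :=
  fun A => if A ∈ E then CT S s A else S.null A

/-- Partial tuple with a single rigid `v0` at `z`. -/
noncomputable def GG (S : Schema Attr) (z : Attr) : Tuple S :=
  fun A => if A = z then v0 S A else S.null A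

/-- The counterexample relation determined by two disjoint sets `g1`, `g2`. -/
noncomputable def rG (S : Schema Attr) (g1 g2 : Finset Attr) : DBRel S :=
  PT S g1 (g1 ∪ g2) ::ₘ PT S g2 (g1 ∪ g2) ::ₘ (g1 ∪ g2).val.map (GG S)

variable {S : Schema Attr}

lemma CT_ne_null (s : Finset Attr) (A : Attr) : CT S s A ≠ S.null A := by
  unfold CT; split
  · exact v1_ne_null S A
  · exact v0_ne_null S A

lemma CT_eq_of_iff {s s' : Finset Attr} {A : Attr} (h : A ∈ s ↔ A ∈ s') :
    CT S s A = CT S s' A := by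
  unfold CT
  by_cases hA : A ∈ s
  · rw [if_pos hA, if_pos (h.1 hA)]
  · rw [if_neg hA, if_neg (fun hc => hA (h.2 hc))]

lemma CT_v0_of_not_mem {s : Finset Attr} {A : Attr} (h : A ∉ s) : CT S s A = v0 S A := by
  unfold CT; rw [if_neg h]

lemma groundsTuple_CT_PT (s E : Finset Attr) : groundsTuple S (CT S s) (PT S s E) := by
  refine ⟨CT_ne_null s, ?_⟩
  intro A hA
  unfold PT at *
  by_cases hE : A ∈ E
  · rw [if_pos hE]
  · rw [if_neg hE] at hA; exact absurd rfl hA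

lemma groundsTuple_CT_GG {s : Finset Attr} {z : Attr} (h : z ∉ s) :
    groundsTuple S (CT S s) (GG S z) := by
  refine ⟨CT_ne_null s, ?_⟩
  intro A hA
  unfold GG at *
  by_cases hz : A = z
  · subst hz; rw [if_pos rfl]; exact CT_v0_of_not_mem h
  · rw [if_neg hz] at hA; exact absurd rfl hA

lemma agreeOn_symm' {W : Finset Attr} {t t' : Tuple S} (h : agreeOn S W t t') :
    agreeOn S W t' t := fun A hA => (h A hA).symm

lemma agreeOn_trans' {W : Finset Attr} {t t' t'' : Tuple S}
    (h : agreeOn S W t t') (h' : agreeOn S W t' t'') : agreeOn S W t t'' :=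
  fun A hA => (h A hA).trans (h' A hA)

lemma agreeOn_CT_of_iff {W s s' : Finset Attr} (h : ∀ A ∈ W, (A ∈ s ↔ A ∈ s')) :
    agreeOn S W (CT S s) (CT S s') := fun A hA => CT_eq_of_iff (h A hA)

/-! ### The satisfaction lemma -/

section Sat

variable {g1 g2 U V : Finset Attr}

/-- Mixed set realizing `g1`-pattern on `U` and `g2`-pattern on `V`. -/
def mixS (g1 g2 U V : Finset Attr) : Finset Attr := (V ∩ g2) ∪ ((U \ V) ∩ g1)

lemma mem_mixS_U (hUVE : ∀ A, A ∈ U → A ∈ V → A ∉ g1 ∪ g2) :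
    ∀ A ∈ U, (A ∈ mixS g1 g2 U V ↔ A ∈ g1) := by
  intro A hA
  unfold mixS
  by_cases hV : A ∈ V
  · have hE := hUVE A hA hV
    simp only [Finset.mem_union, Finset.mem_inter, Finset.mem_sdiff] at hE ⊢
    constructor
    · rintro (⟨_, h2⟩ | ⟨_, h1⟩)
      · exact absurd (Or.inr h2) hE
      · exact h1
    · intro h1; exact absurd (Or.inl h1) hE
  · simp only [Finset.mem_union, Finset.mem_inter, Finset.mem_sdiff]
    constructor
    · rintro (⟨h2, _⟩ | ⟨_, h1⟩)
      · exact absurd h2 hV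
      · exact h1
    · intro h1; exact Or.inr ⟨⟨hA, hV⟩, h1⟩

lemma mem_mixS_V : ∀ A ∈ V, (A ∈ mixS g1 g2 U V ↔ A ∈ g2) := by
  intro A hV
  unfold mixS
  simp only [Finset.mem_union, Finset.mem_inter, Finset.mem_sdiff]
  constructor
  · rintro (⟨_, h2⟩ | ⟨⟨_, hnV⟩, _⟩)
    · exact h2
    · exact absurd hV hnV
  · intro h2; exact Or.inl ⟨hV, h2⟩

end Sat

end PIAAux
namespace PIAAux

variable {Attr : Type} [DecidableEq Attr] {S : Schema Attr}

section SatMain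

variable {g1 g2 U V : Finset Attr}

lemma agreeOn_refl' (W : Finset Attr) (t : Tuple S) : agreeOn S W t t := fun _ _ => rfl

/-- Main satisfaction lemma for the counterexample relation. -/
lemma sat_rG (hdisj : Disjoint g1 g2)
    (hUVE : ∀ A, A ∈ U → A ∈ V → A ∉ g1 ∪ g2)
    (hZ1 : (U ∩ (g1 ∪ g2)).Nonempty → (V ∩ (g1 ∪ g2)).Nonempty →
      ∃ z ∈ g1 ∪ g2, z ∉ mixS g1 g2 U V)
    (hZ2 : (U ∩ (g1 ∪ g2)).Nonempty → (V ∩ (g1 ∪ g2)).Nonempty →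
      ∃ z ∈ g1 ∪ g2, z ∉ mixS g2 g1 U V) :
    satPIA S (rG S g1 g2) U V := by
  classical
  set E := g1 ∪ g2 with hE
  have hUVE' : ∀ A, A ∈ U → A ∈ V → A ∉ g2 ∪ g1 := by
    intro A h1 h2
    rw [Finset.union_comm]
    exact hUVE A h1 h2
  -- default grounding for the G-tuples
  set def0 : Attr → Tuple S := fun z => if z ∈ g1 then CT S g2 else CT S g1 with hdef0
  have hdef0g : ∀ z, groundsTuple S (def0 z) (GG S z) := by
    intro z
    simp only [hdef0]
    by_cases hz : z ∈ g1
    · rw [if_pos hz]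
      exact groundsTuple_CT_GG (Finset.disjoint_left.1 hdisj hz)
    · rw [if_neg hz]
      exact groundsTuple_CT_GG hz
  have hdef0or : ∀ z, def0 z = CT S g2 ∨ def0 z = CT S g1 := by
    intro z
    simp only [hdef0]
    by_cases hz : z ∈ g1
    · exact Or.inl (if_pos hz)
    · exact Or.inr (if_neg hz)
  by_cases hU : (U ∩ E).Nonempty
  · by_cases hV : (V ∩ E).Nonempty
    · -- main case
      obtain ⟨z1', hz1E, hz1m⟩ := hZ1 hU hV
      obtain ⟨z2', hz2E, hz2m⟩ := hZ2 hU hV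
      obtain ⟨z1, z2, h1E, h1m, h2E, h2m, hne⟩ :
          ∃ z1 z2, z1 ∈ E ∧ z1 ∉ mixS g1 g2 U V ∧ z2 ∈ E ∧ z2 ∉ mixS g2 g1 U V ∧ z1 ≠ z2 := by
        by_cases hzz : z1' = z2'
        · subst hzz
          have hzU : z1' ∉ U := by
            intro hU'
            have hzV : z1' ∉ V := fun hV' => (hUVE _ hU' hV') hz1E
            have e1 := (mem_mixS_U hUVE z1' hU')
            have e2 := (mem_mixS_U hUVE' z1' hU')
            have hg1 : z1' ∉ g1 := fun h => hz1m (e1.2 h)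
            have hg2 : z1' ∉ g2 := fun h => hz2m (e2.2 h)
            rcases Finset.mem_union.1 hz1E with h | h
            · exact hg1 h
            · exact hg2 h
          obtain ⟨a, haUE⟩ := hU
          have haU : a ∈ U := (Finset.mem_inter.1 haUE).1
          have haE : a ∈ E := (Finset.mem_inter.1 haUE).2
          have hane : a ≠ z1' := fun h => hzU (h ▸ haU)
          by_cases hag1 : a ∈ g1
          · have hag2 : a ∉ g2 := Finset.disjoint_left.1 hdisj hag1
            have ham2 : a ∉ mixS g2 g1 U V := fun hm =>
              hag2 ((mem_mixS_U hUVE' a haU).1 hm)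
            exact ⟨z1', a, hz1E, hz1m, haE, ham2, hane.symm⟩
          · have ham1 : a ∉ mixS g1 g2 U V := fun hm =>
              hag1 ((mem_mixS_U hUVE a haU).1 hm)
            exact ⟨a, z1', haE, ham1, hz1E, hz2m, hane⟩
        · exact ⟨z1', z2', hz1E, hz1m, hz2E, hz2m, hzz⟩
      set M1 : Tuple S := CT S (mixS g1 g2 U V) with hM1
      set M2 : Tuple S := CT S (mixS g2 g1 U V) with hM2
      set F : Attr → Tuple S := fun z => if z = z1 then M1 else if z = z2 then M2 else def0 z
        with hFdef
      set r' : DBRel S := CT S g1 ::ₘ CT S g2 ::ₘ E.val.map F with hr'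
      have hFg : ∀ z ∈ E.val, groundsTuple S (F z) (GG S z) := by
        intro z hz
        simp only [hFdef]
        by_cases h1 : z = z1
        · subst h1
          rw [if_pos rfl]
          exact groundsTuple_CT_GG h1m
        · rw [if_neg h1]
          by_cases h2 : z = z2
          · subst h2
            rw [if_pos rfl]
            exact groundsTuple_CT_GG h2m
          · rw [if_neg h2]
            exact hdef0g z
      have hground : grounds S r' (rG S g1 g2) := by
        unfold rG grounds
        rw [hr']
        exact Multiset.Rel.cons (groundsTuple_CT_PT g1 E)
          (Multiset.Rel.cons (groundsTuple_CT_PT g2 E)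
            (rel_map_pair F (GG S) E.val hFg))
      have hmem1 : CT S g1 ∈ r' := Multiset.mem_cons_self _ _
      have hmem2 : CT S g2 ∈ r' := Multiset.mem_cons_of_mem (Multiset.mem_cons_self _ _)
      have hmemM1 : M1 ∈ r' := by
        refine Multiset.mem_cons_of_mem (Multiset.mem_cons_of_mem (Multiset.mem_map.2 ⟨z1, ?_, ?_⟩))
        · exact Finset.mem_def.1 h1E
        · show (if z1 = z1 then M1 else if z1 = z2 then M2 else def0 z1) = M1
          rw [if_pos rfl]
      have hmemM2 : M2 ∈ r' := by
        refine Multiset.mem_cons_of_mem (Multiset.mem_cons_of_mem (Multiset.mem_map.2 ⟨z2, ?_, ?_⟩))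
        · exact Finset.mem_def.1 h2E
        · show (if z2 = z1 then M1 else if z2 = z2 then M2 else def0 z2) = M2
          rw [if_neg (Ne.symm hne), if_pos rfl]
      -- every element is a CT
      have hCT : ∀ t ∈ r', ∃ s, t = CT S s := by
        intro t ht
        rw [hr'] at ht
        rcases Multiset.mem_cons.1 ht with rfl | ht
        · exact ⟨g1, rfl⟩
        rcases Multiset.mem_cons.1 ht with rfl | ht
        · exact ⟨g2, rfl⟩
        obtain ⟨z, hz, rfl⟩ := Multiset.mem_map.1 ht
        simp only [hFdef]
        by_cases h1 : z = z1
        · rw [if_pos h1]; exact ⟨_, hM1⟩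
        rw [if_neg h1]
        by_cases h2 : z = z2
        · rw [if_pos h2]; exact ⟨_, hM2⟩
        rw [if_neg h2]
        rcases hdef0or z with h | h
        · exact ⟨g2, h⟩
        · exact ⟨g1, h⟩
      -- classification
      have hagM1U : agreeOn S U M1 (CT S g1) := agreeOn_CT_of_iff (mem_mixS_U hUVE)
      have hagM1V : agreeOn S V M1 (CT S g2) := agreeOn_CT_of_iff mem_mixS_V
      have hagM2U : agreeOn S U M2 (CT S g2) := agreeOn_CT_of_iff (mem_mixS_U hUVE')
      have hagM2V : agreeOn S V M2 (CT S g1) := agreeOn_CT_of_iff mem_mixS_V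
      have hclass : ∀ t ∈ r',
          (agreeOn S U t (CT S g1) ∨ agreeOn S U t (CT S g2)) ∧
          (agreeOn S V t (CT S g1) ∨ agreeOn S V t (CT S g2)) := by
        intro t ht
        rw [hr'] at ht
        rcases Multiset.mem_cons.1 ht with rfl | ht
        · exact ⟨Or.inl (agreeOn_refl' _ _), Or.inl (agreeOn_refl' _ _)⟩
        rcases Multiset.mem_cons.1 ht with rfl | ht
        · exact ⟨Or.inr (agreeOn_refl' _ _), Or.inr (agreeOn_refl' _ _)⟩
        obtain ⟨z, hz, rfl⟩ := Multiset.mem_map.1 ht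
        simp only [hFdef]
        by_cases h1 : z = z1
        · rw [if_pos h1]
          exact ⟨Or.inl hagM1U, Or.inr hagM1V⟩
        rw [if_neg h1]
        by_cases h2 : z = z2
        · rw [if_pos h2]
          exact ⟨Or.inr hagM2U, Or.inl hagM2V⟩
        rw [if_neg h2]
        rcases hdef0or z with h | h
        · rw [h]
          exact ⟨Or.inr (agreeOn_refl' _ _), Or.inr (agreeOn_refl' _ _)⟩
        · rw [h]
          exact ⟨Or.inl (agreeOn_refl' _ _), Or.inl (agreeOn_refl' _ _)⟩
      refine ⟨r', hground, ?_, ?_⟩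
      · intro t ht A hA
        obtain ⟨s, rfl⟩ := hCT t ht
        exact CT_ne_null s A
      · intro t1 ht1 t2 ht2
        obtain ⟨hU1, _⟩ := hclass t1 ht1
        obtain ⟨_, hV2⟩ := hclass t2 ht2
        rcases hU1 with hU1 | hU1 <;> rcases hV2 with hV2 | hV2
        · exact ⟨CT S g1, hmem1, agreeOn_symm' hU1, agreeOn_symm' hV2⟩
        · exact ⟨M1, hmemM1, agreeOn_trans' hagM1U (agreeOn_symm' hU1),
            agreeOn_trans' hagM1V (agreeOn_symm' hV2)⟩
        · exact ⟨M2, hmemM2, agreeOn_trans' hagM2U (agreeOn_symm' hU1),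
            agreeOn_trans' hagM2V (agreeOn_symm' hV2)⟩
        · exact ⟨CT S g2, hmem2, agreeOn_symm' hU1, agreeOn_symm' hV2⟩
    · -- V ∩ E = ∅ : easy case
      have hVE : ∀ A ∈ V, A ∉ E := by
        intro A hA hAE
        exact hV ⟨A, Finset.mem_inter.2 ⟨hA, hAE⟩⟩
      set r' : DBRel S := CT S g1 ::ₘ CT S g2 ::ₘ E.val.map def0 with hr'
      have hground : grounds S r' (rG S g1 g2) := by
        unfold rG grounds
        rw [hr']
        exact Multiset.Rel.cons (groundsTuple_CT_PT g1 E)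
          (Multiset.Rel.cons (groundsTuple_CT_PT g2 E)
            (rel_map_pair def0 (GG S) E.val (fun z _ => hdef0g z)))
      have hCT : ∀ t ∈ r', t = CT S g1 ∨ t = CT S g2 := by
        intro t ht
        rw [hr'] at ht
        rcases Multiset.mem_cons.1 ht with rfl | ht
        · exact Or.inl rfl
        rcases Multiset.mem_cons.1 ht with rfl | ht
        · exact Or.inr rfl
        obtain ⟨z, hz, rfl⟩ := Multiset.mem_map.1 ht
        rcases hdef0or z with h | h
        · exact Or.inr h
        · exact Or.inl h
      have houtside : ∀ t ∈ r', ∀ A ∉ E, t A = v0 S A := by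
        intro t ht A hA
        have h1 : A ∉ g1 := fun h => hA (Finset.mem_union_left _ h)
        have h2 : A ∉ g2 := fun h => hA (Finset.mem_union_right _ h)
        rcases hCT t ht with rfl | rfl
        · exact CT_v0_of_not_mem h1
        · exact CT_v0_of_not_mem h2
      refine ⟨r', hground, ?_, ?_⟩
      · intro t ht A hA
        rcases hCT t ht with rfl | rfl
        · exact CT_ne_null g1 A
        · exact CT_ne_null g2 A
      · intro t1 ht1 t2 ht2
        refine ⟨t1, ht1, agreeOn_refl' _ _, ?_⟩
        intro A hA
        rw [houtside t1 ht1 A (hVE A hA), houtside t2 ht2 A (hVE A hA)]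
  · -- U ∩ E = ∅ : easy case
    have hUE : ∀ A ∈ U, A ∉ E := by
      intro A hA hAE
      exact hU ⟨A, Finset.mem_inter.2 ⟨hA, hAE⟩⟩
    set r' : DBRel S := CT S g1 ::ₘ CT S g2 ::ₘ E.val.map def0 with hr'
    have hground : grounds S r' (rG S g1 g2) := by
      unfold rG grounds
      rw [hr']
      exact Multiset.Rel.cons (groundsTuple_CT_PT g1 E)
        (Multiset.Rel.cons (groundsTuple_CT_PT g2 E)
          (rel_map_pair def0 (GG S) E.val (fun z _ => hdef0g z)))
    have hCT : ∀ t ∈ r', t = CT S g1 ∨ t = CT S g2 := by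
      intro t ht
      rw [hr'] at ht
      rcases Multiset.mem_cons.1 ht with rfl | ht
      · exact Or.inl rfl
      rcases Multiset.mem_cons.1 ht with rfl | ht
      · exact Or.inr rfl
      obtain ⟨z, hz, rfl⟩ := Multiset.mem_map.1 ht
      rcases hdef0or z with h | h
      · exact Or.inr h
      · exact Or.inl h
    have houtside : ∀ t ∈ r', ∀ A ∉ E, t A = v0 S A := by
      intro t ht A hA
      have h1 : A ∉ g1 := fun h => hA (Finset.mem_union_left _ h)
      have h2 : A ∉ g2 := fun h => hA (Finset.mem_union_right _ h)
      rcases hCT t ht with rfl | rfl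
      · exact CT_v0_of_not_mem h1
      · exact CT_v0_of_not_mem h2
    refine ⟨r', hground, ?_, ?_⟩
    · intro t ht A hA
      rcases hCT t ht with rfl | rfl
      · exact CT_ne_null g1 A
      · exact CT_ne_null g2 A
    · intro t1 ht1 t2 ht2
      refine ⟨t2, ht2, ?_, agreeOn_refl' _ _⟩
      intro A hA
      rw [houtside t1 ht1 A (hUE A hA), houtside t2 ht2 A (hUE A hA)]

end SatMain

end PIAAux
namespace PIAAux

variable {Attr : Type} [DecidableEq Attr] {S : Schema Attr}

/-! ### Failure lemmas -/

lemma partner_PT_val {p : Tuple S} {s E : Finset Attr}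
    (hgp : groundsTuple S p (PT S s E)) : ∀ A ∈ E, p A = CT S s A := by
  intro A hA
  have h1 : PT S s E A = CT S s A := if_pos hA
  have h2 : PT S s E A ≠ S.null A := by rw [h1]; exact CT_ne_null s A
  rw [hgp.2 A h2, h1]

lemma partner_GG_val {c : Tuple S} {z : Attr}
    (hgc : groundsTuple S c (GG S z)) : c z = v0 S z := by
  have h1 : GG S z z = v0 S z := if_pos rfl
  have h2 : GG S z z ≠ S.null z := by rw [h1]; exact v0_ne_null S z
  rw [hgc.2 z h2, h1]

lemma CT_v1_of_mem {s : Finset Attr} {A : Attr} (h : A ∈ s) : CT S s A = v1 S A :=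
  if_pos h

/-- Failure lemma, disjoint case. -/
lemma fail_rG_b {g1 g2 X Y : Finset Attr} (hdisj : Disjoint g1 g2)
    (hg1 : g1.Nonempty) (hg2 : g2.Nonempty) (hg1X : g1 ⊆ X) (hg2Y : g2 ⊆ Y) :
    ¬ satPIA S (rG S g1 g2) X Y := by
  rintro ⟨r', hg, hcomp, hcross⟩
  set E := g1 ∪ g2 with hE
  obtain ⟨p1, hp1, hgp1⟩ := rel_partner_right hg (PT S g1 E) (Multiset.mem_cons_self _ _)
  obtain ⟨p2, hp2, hgp2⟩ := rel_partner_right hg (PT S g2 E)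
    (Multiset.mem_cons_of_mem (Multiset.mem_cons_self _ _))
  obtain ⟨c, hc, hcX, hcY⟩ := hcross p1 hp1 p2 hp2
  obtain ⟨s, hsmem, hgc⟩ := rel_partner_left hg c hc
  obtain ⟨x₀, hx₀⟩ := hg1
  obtain ⟨y₀, hy₀⟩ := hg2
  have hx₀E : x₀ ∈ E := Finset.mem_union_left _ hx₀
  have hy₀E : y₀ ∈ E := Finset.mem_union_right _ hy₀
  have hp1v := partner_PT_val hgp1
  have hp2v := partner_PT_val hgp2
  rcases Multiset.mem_cons.1 hsmem with rfl | hsmem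
  · -- c grounds PT g1 E
    have h1 : c y₀ = v0 S y₀ := by
      rw [partner_PT_val hgc y₀ hy₀E, CT_v0_of_not_mem (Finset.disjoint_right.1 hdisj hy₀)]
    have h2 : c y₀ = v1 S y₀ := by
      rw [hcY y₀ (hg2Y hy₀), hp2v y₀ hy₀E, CT_v1_of_mem hy₀]
    exact v0_ne_v1 S y₀ (h1.symm.trans h2)
  rcases Multiset.mem_cons.1 hsmem with rfl | hsmem
  · -- c grounds PT g2 E
    have h1 : c x₀ = v0 S x₀ := by
      rw [partner_PT_val hgc x₀ hx₀E, CT_v0_of_not_mem (Finset.disjoint_left.1 hdisj hx₀)]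
    have h2 : c x₀ = v1 S x₀ := by
      rw [hcX x₀ (hg1X hx₀), hp1v x₀ hx₀E, CT_v1_of_mem hx₀]
    exact v0_ne_v1 S x₀ (h1.symm.trans h2)
  · -- c grounds some GG z
    obtain ⟨z, hz, rfl⟩ := Multiset.mem_map.1 hsmem
    have hzE : z ∈ E := Finset.mem_def.2 hz
    have h1 : c z = v0 S z := partner_GG_val hgc
    rcases Finset.mem_union.1 hzE with hzg | hzg
    · have h2 : c z = v1 S z := by
        rw [hcX z (hg1X hzg), hp1v z hzE, CT_v1_of_mem hzg]
      exact v0_ne_v1 S z (h1.symm.trans h2)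
    · have h2 : c z = v1 S z := by
        rw [hcY z (hg2Y hzg), hp2v z hzE, CT_v1_of_mem hzg]
      exact v0_ne_v1 S z (h1.symm.trans h2)

/-- Failure lemma, overlap case. -/
lemma fail_rG_a {g1 g2 X Y : Finset Attr} {A₀ : Attr} (hdisj : Disjoint g1 g2)
    (hA1 : A₀ ∈ g1) (hAX : A₀ ∈ X) (hAY : A₀ ∈ Y) :
    ¬ satPIA S (rG S g1 g2) X Y := by
  rintro ⟨r', hg, hcomp, hcross⟩
  set E := g1 ∪ g2 with hE
  obtain ⟨p1, hp1, hgp1⟩ := rel_partner_right hg (PT S g1 E) (Multiset.mem_cons_self _ _)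
  obtain ⟨p2, hp2, hgp2⟩ := rel_partner_right hg (PT S g2 E)
    (Multiset.mem_cons_of_mem (Multiset.mem_cons_self _ _))
  obtain ⟨c, hc, hcX, hcY⟩ := hcross p1 hp1 p2 hp2
  have hA₀E : A₀ ∈ E := Finset.mem_union_left _ hA1
  have h1 : c A₀ = v1 S A₀ := by
    rw [hcX A₀ hAX, partner_PT_val hgp1 A₀ hA₀E, CT_v1_of_mem hA1]
  have h2 : c A₀ = v0 S A₀ := by
    rw [hcY A₀ hAY, partner_PT_val hgp2 A₀ hA₀E,
      CT_v0_of_not_mem (Finset.disjoint_left.1 hdisj hA1)]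
  exact v0_ne_v1 S A₀ (h2.symm.trans h1)

/-! ### The completeness counterexample -/

lemma counterexample {Γ : Finset (Finset Attr × Finset Attr)} {X Y : Finset Attr}
    (hP : ¬ PP Γ X Y) : ¬ impliesPIA S Γ X Y := by
  classical
  have hP1 : ¬ X ⊆ CC Γ := fun h => hP (Or.inl h)
  have hP2 : ¬ Y ⊆ CC Γ := fun h => hP (Or.inr (Or.inl h))
  have hP3 : ∀ p ∈ Γ,
      ¬ ((X \ CC Γ ⊆ p.1 ∧ Y \ CC Γ ⊆ p.2) ∨ (X \ CC Γ ⊆ p.2 ∧ Y \ CC Γ ⊆ p.1)) :=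
    fun p hp hc => hP (Or.inr (Or.inr ⟨p, hp, hc⟩))
  set X0 := X \ CC Γ with hX0def
  set Y0 := Y \ CC Γ with hY0def
  have hX0 : X0.Nonempty := by
    rw [hX0def]
    exact Finset.sdiff_nonempty.2 hP1
  have hY0 : Y0.Nonempty := by
    rw [hY0def]
    exact Finset.sdiff_nonempty.2 hP2
  have hX0C : ∀ A ∈ X0, A ∉ CC Γ := fun A hA => (Finset.mem_sdiff.1 hA).2
  have hY0C : ∀ A ∈ Y0, A ∉ CC Γ := fun A hA => (Finset.mem_sdiff.1 hA).2
  by_cases hsep : (X0 ∩ Y0).Nonempty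
  · -- overlap case
    set g1 := X0 ∪ Y0 with hg1def
    have hdisj : Disjoint g1 (∅ : Finset Attr) := Finset.disjoint_empty_right _
    have hsat : ∀ p ∈ Γ, satPIA S (rG S g1 ∅) p.1 p.2 := by
      intro p hp
      have hUVE : ∀ A, A ∈ p.1 → A ∈ p.2 → A ∉ g1 ∪ ∅ := by
        intro A h1 h2 hAE
        have hAC : A ∈ CC Γ := mem_CC.2 ⟨p, hp, h1, h2⟩
        rcases Finset.mem_union.1 hAE with hA | hA
        · rcases Finset.mem_union.1 hA with hA' | hA'
          · exact hX0C A hA' hAC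
          · exact hY0C A hA' hAC
        · simp at hA
      refine sat_rG hdisj hUVE ?_ ?_
      · intro _ hV
        obtain ⟨b, hb⟩ := hV
        have hbV : b ∈ p.2 := (Finset.mem_inter.1 hb).1
        have hbE : b ∈ g1 ∪ ∅ := (Finset.mem_inter.1 hb).2
        refine ⟨b, hbE, ?_⟩
        intro hbm
        unfold mixS at hbm
        rcases Finset.mem_union.1 hbm with h | h
        · have := (Finset.mem_inter.1 h).2; simp at this
        · have hbU : b ∈ p.1 := (Finset.mem_sdiff.1 (Finset.mem_inter.1 h).1).1
          exact hUVE b hbU hbV hbE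
      · intro hU _
        obtain ⟨a, ha⟩ := hU
        have haU : a ∈ p.1 := (Finset.mem_inter.1 ha).1
        have haE : a ∈ g1 ∪ ∅ := (Finset.mem_inter.1 ha).2
        refine ⟨a, haE, ?_⟩
        intro ham
        unfold mixS at ham
        rcases Finset.mem_union.1 ham with h | h
        · have haV : a ∈ p.2 := (Finset.mem_inter.1 h).1
          exact hUVE a haU haV haE
        · have := (Finset.mem_inter.1 h).2; simp at this
    obtain ⟨A₀, hA₀⟩ := hsep
    have hA₀X0 : A₀ ∈ X0 := (Finset.mem_inter.1 hA₀).1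
    have hA₀Y0 : A₀ ∈ Y0 := (Finset.mem_inter.1 hA₀).2
    have hfail : ¬ satPIA S (rG S g1 ∅) X Y :=
      fail_rG_a hdisj (Finset.mem_union_left _ hA₀X0)
        ((Finset.mem_sdiff.1 hA₀X0).1) ((Finset.mem_sdiff.1 hA₀Y0).1)
    intro himp
    exact hfail (himp _ hsat)
  · -- disjoint case
    have hdisj : Disjoint X0 Y0 := by
      rw [Finset.disjoint_iff_inter_eq_empty]
      exact Finset.not_nonempty_iff_eq_empty.1 hsep
    have hsat : ∀ p ∈ Γ, satPIA S (rG S X0 Y0) p.1 p.2 := by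
      intro p hp
      have hUVE : ∀ A, A ∈ p.1 → A ∈ p.2 → A ∉ X0 ∪ Y0 := by
        intro A h1 h2 hAE
        have hAC : A ∈ CC Γ := mem_CC.2 ⟨p, hp, h1, h2⟩
        rcases Finset.mem_union.1 hAE with hA | hA
        · exact hX0C A hA hAC
        · exact hY0C A hA hAC
      refine sat_rG hdisj hUVE ?_ ?_
      · intro _ _
        by_contra hno
        push_neg at hno
        refine hP3 p hp (Or.inl ⟨?_, ?_⟩)
        · intro z hz
          have hzE : z ∈ X0 ∪ Y0 := Finset.mem_union_left _ hz
          have hzm := hno z hzE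
          unfold mixS at hzm
          rcases Finset.mem_union.1 hzm with h | h
          · exact absurd ((Finset.mem_inter.1 h).2) (Finset.disjoint_left.1 hdisj hz)
          · exact (Finset.mem_sdiff.1 (Finset.mem_inter.1 h).1).1
        · intro z hz
          have hzE : z ∈ X0 ∪ Y0 := Finset.mem_union_right _ hz
          have hzm := hno z hzE
          unfold mixS at hzm
          rcases Finset.mem_union.1 hzm with h | h
          · exact (Finset.mem_inter.1 h).1
          · exact absurd ((Finset.mem_inter.1 h).2) (Finset.disjoint_right.1 hdisj hz)
      · intro _ _
        by_contra hno
        push_neg at hno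
        refine hP3 p hp (Or.inr ⟨?_, ?_⟩)
        · intro z hz
          have hzE : z ∈ X0 ∪ Y0 := Finset.mem_union_left _ hz
          have hzm := hno z hzE
          unfold mixS at hzm
          rcases Finset.mem_union.1 hzm with h | h
          · exact (Finset.mem_inter.1 h).1
          · exact absurd ((Finset.mem_inter.1 h).2) (Finset.disjoint_left.1 hdisj hz)
        · intro z hz
          have hzE : z ∈ X0 ∪ Y0 := Finset.mem_union_right _ hz
          have hzm := hno z hzE
          unfold mixS at hzm
          rcases Finset.mem_union.1 hzm with h | h
          · exact absurd ((Finset.mem_inter.1 h).2) (Finset.disjoint_right.1 hdisj hz)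
          · exact (Finset.mem_sdiff.1 (Finset.mem_inter.1 h).1).1
    have hfail : ¬ satPIA S (rG S X0 Y0) X Y :=
      fail_rG_b hdisj hX0 hY0 Finset.sdiff_subset Finset.sdiff_subset
    intro himp
    exact hfail (himp _ hsat)

end PIAAux
/-- The rule set 𝔍_p is sound for all PIAs, and sound and complete for the
(PIA, PIA*)-implication problem. -/
theorem pia_axiomatisation_sound_and_complete_for_PIAstar [Fintype Attr] (S : Schema Attr) :
    (∀ (Γ : Finset (Finset Attr × Finset Attr)) (X Y : Finset Attr),
      DerivPIA Γ X Y → impliesPIA S Γ X Y) ∧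
    (∀ (Γ : Finset (Finset Attr × Finset Attr)) (X Y : Finset Attr), PIAstar X Y →
      (impliesPIA S Γ X Y ↔ DerivPIA Γ X Y)) := by
  constructor
  · intro Γ X Y h
    exact PIAAux.soundness Γ X Y h
  · intro Γ X Y _
    constructor
    · intro himp
      by_contra hder
      have hP : ¬ PIAAux.PP Γ X Y := fun hp => hder (PIAAux.PP_to_deriv hp)
      exact PIAAux.counterexample hP himp
    · intro hder
      exact PIAAux.soundness Γ X Y hder
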